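/- Let n ≥ 1, λ > 0 and 0 < m̲ ≤ m̄ be real constants. Let W : ℝ → Matrix (Fin n) (Fin n) ℝ be such that at every time t, W has a derivative W'(t), W(t) is symmetric, and m̲‖v‖² ≤ vᵀ W(t) v ≤ m̄‖v‖² for every vector v ∈ Fin n → ℝ. Let A, B : ℝ → Matrix (Fin n) (Fin n) ℝ and ρ : ℝ → ℝ be such that for every t the matrix −W'(t) + A(t)·W(t) + W(t)·A(t)ᵀ − ρ(t)·B(t)·B(t)ᵀ + 2λ·W(t) is negative semidefinite. If δ : ℝ → (Fin n → ℝ) is differentiable with δ'(t) = (A(t) − (ρ(t)/2)·B(t)·B(t)ᵀ·W(t)⁻¹) applied to δ(t) for every t, then for every t ≥ 0 one has ‖δ(t)‖ ≤ √(m̄/m̲) · exp(−λ t) · ‖δ(0)‖. -/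

import Mathlib

open Matrix

attribute [local instance] Matrix.linftyOpNormedAddCommGroup Matrix.linftyOpNormedSpace
attribute [local instance] Matrix.linftyOpNormedRing Matrix.linftyOpNormedAlgebra

lemma aux_norm_sq_eq_dot {n : ℕ} (v : EuclideanSpace ℝ (Fin n)) : ‖v‖ ^ 2 = v ⬝ᵥ v := by
  rw [EuclideanSpace.norm_eq, Real.sq_sqrt (by positivity)]
  simp [dotProduct, Real.norm_eq_abs, sq_abs, pow_two]

lemma aux_psd_cauchy_schwarz {n : ℕ} (P : Matrix (Fin n) (Fin n) ℝ) (hsym : P.IsSymm)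
    (hpsd : ∀ v : Fin n → ℝ, 0 ≤ v ⬝ᵥ P.mulVec v) (v w : Fin n → ℝ) :
    (w ⬝ᵥ P.mulVec v) ^ 2 ≤ (w ⬝ᵥ P.mulVec w) * (v ⬝ᵥ P.mulVec v) := by
  have hswap : v ⬝ᵥ P.mulVec w = w ⬝ᵥ P.mulVec v := by
    rw [Matrix.dotProduct_mulVec]
    conv_lhs => rw [← hsym.eq]
    rw [Matrix.vecMul_transpose, dotProduct_comm]
  set a := w ⬝ᵥ P.mulVec w with ha
  set b := w ⬝ᵥ P.mulVec v with hb
  set d := v ⬝ᵥ P.mulVec v with hd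
  have key : ∀ c : ℝ, 0 ≤ a - 2 * c * b + c ^ 2 * d := by
    intro c
    have h := hpsd (w - c • v)
    have hexp : (w - c • v) ⬝ᵥ P.mulVec (w - c • v) = a - 2 * c * b + c ^ 2 * d := by
      simp only [Matrix.mulVec_sub, Matrix.mulVec_smul, sub_dotProduct,
        dotProduct_sub, smul_dotProduct, dotProduct_smul,
        smul_eq_mul, hswap]
      ring
    rw [hexp] at h
    exact h
  have hd0 : 0 ≤ d := hpsd v
  rcases eq_or_lt_of_le hd0 with hd0' | hd0'
  · have hb0 : b = 0 := by
      by_contra hb0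
      have h := key ((a + 1) / (2 * b))
      rw [← hd0'] at h
      have h2 : 2 * ((a + 1) / (2 * b)) * b = a + 1 := by field_simp
      nlinarith [h, h2]
    rw [hb0]
    nlinarith [hpsd w]
  · have h := key (b / d)
    have he : a - 2 * (b / d) * b + (b / d) ^ 2 * d = a - b ^ 2 / d := by
      field_simp; ring
    rw [he] at h
    have h3 : b ^ 2 / d ≤ a := by linarith
    calc b ^ 2 = b ^ 2 / d * d := by field_simp
      _ ≤ a * d := mul_le_mul_of_nonneg_right h3 hd0

lemma aux_inv_deriv {n : ℕ} (W W' : ℝ → Matrix (Fin n) (Fin n) ℝ)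
    (hWderiv : ∀ t, HasDerivAt W (W' t) t)
    (hunit : ∀ t, IsUnit (W t)) (s : ℝ) :
    HasDerivAt (fun t => (W t)⁻¹) (-((W s)⁻¹ * W' s * (W s)⁻¹)) s := by
  haveI : CompleteSpace (Matrix (Fin n) (Fin n) ℝ) := FiniteDimensional.complete ℝ _
  obtain ⟨u, hu⟩ := hunit s
  have h1 : HasFDerivAt Ring.inverse
      (-ContinuousLinearMap.mulLeftRight ℝ _ (↑u⁻¹) (↑u⁻¹)) (W s) := by
    rw [← hu]; exact hasFDerivAt_ringInverse u
  have h2 := h1.comp_hasDerivAt s (hWderiv s)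
  have h3 : (fun t => Ring.inverse (W t)) = fun t => (W t)⁻¹ := by
    funext t; rw [Matrix.nonsing_inv_eq_ringInverse]
  rw [Function.comp_def, h3] at h2
  refine h2.congr_deriv ?_
  have hui : (↑u⁻¹ : Matrix (Fin n) (Fin n) ℝ) = (W s)⁻¹ := by
    rw [Matrix.coe_units_inv, hu]
  simp [ContinuousLinearMap.mulLeftRight_apply, hui]

lemma aux_entry_deriv {n : ℕ} (F F' : ℝ → Matrix (Fin n) (Fin n) ℝ) (s : ℝ)
    (hF : HasDerivAt F (F' s) s) (i j : Fin n) :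
    HasDerivAt (fun t => F t i j) (F' s i j) s := by
  let L : Matrix (Fin n) (Fin n) ℝ →ₗ[ℝ] ℝ :=
    (LinearMap.proj j).comp (LinearMap.proj (R := ℝ) (φ := fun _ : Fin n => Fin n → ℝ) i)
  exact (LinearMap.toContinuousLinearMap L).hasFDerivAt.comp_hasDerivAt s hF

lemma aux_comp_deriv {n : ℕ} (δ δ' : ℝ → EuclideanSpace ℝ (Fin n))
    (s : ℝ) (h : HasDerivAt δ (δ' s) s) (i : Fin n) :
    HasDerivAt (fun t => δ t i) (δ' s i) s := by
  have h2 := (EuclideanSpace.proj (𝕜 := ℝ) i).hasFDerivAt.comp_hasDerivAt s h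
  exact h2

theorem stmt_0 (n : ℕ) (hn : 1 ≤ n) (lam mlo mhi : ℝ)
    (hlam : 0 < lam) (hmlo : 0 < mlo) (hm : mlo ≤ mhi)
    (W W' : ℝ → Matrix (Fin n) (Fin n) ℝ)
    (hWderiv : ∀ t, HasDerivAt W (W' t) t)
    (hWsym : ∀ t, (W t).IsSymm)
    (hWlo : ∀ t, ∀ v : EuclideanSpace ℝ (Fin n), mlo * ‖v‖ ^ 2 ≤ v ⬝ᵥ (W t).mulVec v)
    (hWhi : ∀ t, ∀ v : EuclideanSpace ℝ (Fin n), v ⬝ᵥ (W t).mulVec v ≤ mhi * ‖v‖ ^ 2)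
    (A B : ℝ → Matrix (Fin n) (Fin n) ℝ) (ρ : ℝ → ℝ)
    (hNSD : ∀ t, ∀ v : Fin n → ℝ,
      v ⬝ᵥ (-(W' t) + A t * W t + W t * (A t)ᵀ - ρ t • (B t * (B t)ᵀ)
            + (2 * lam) • W t).mulVec v ≤ 0)
    (δ : ℝ → EuclideanSpace ℝ (Fin n)) (hδ : Differentiable ℝ δ)
    (hode : ∀ t, deriv δ t =
      (A t - (ρ t / 2) • (B t * (B t)ᵀ * (W t)⁻¹)).mulVec (δ t)) :
    ∀ t, 0 ≤ t → ‖δ t‖ ≤ Real.sqrt (mhi / mlo) * Real.exp (-lam * t) * ‖δ 0‖ := by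
  have hmhi : 0 < mhi := lt_of_lt_of_le hmlo hm
  set δ' : ℝ → EuclideanSpace ℝ (Fin n) := deriv δ with hδ'p
  have hδd : ∀ s, HasDerivAt δ (δ' s) s := by
    intro s
    rw [hδ'p]
    exact (hδ s).hasDerivAt
  -- dot-product versions of the quadratic bounds
  have hdotnn : ∀ v : Fin n → ℝ, 0 ≤ v ⬝ᵥ v := fun v =>
    Finset.sum_nonneg fun i _ => mul_self_nonneg (v i)
  have hWlo' : ∀ s (v : Fin n → ℝ), mlo * (v ⬝ᵥ v) ≤ v ⬝ᵥ (W s).mulVec v := by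
    intro s v
    have h := hWlo s (WithLp.toLp 2 v)
    rwa [aux_norm_sq_eq_dot] at h
  have hWhi' : ∀ s (v : Fin n → ℝ), v ⬝ᵥ (W s).mulVec v ≤ mhi * (v ⬝ᵥ v) := by
    intro s v
    have h := hWhi s (WithLp.toLp 2 v)
    rwa [aux_norm_sq_eq_dot] at h
  have hWpsd : ∀ s, ∀ v : Fin n → ℝ, 0 ≤ v ⬝ᵥ (W s).mulVec v := by
    intro s v
    have := mul_nonneg hmlo.le (hdotnn v)
    linarith [hWlo' s v]
  set M : ℝ → Matrix (Fin n) (Fin n) ℝ := fun s => (W s)⁻¹ with hMdef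
  have hunit : ∀ s, IsUnit (W s) := by
    intro s
    have hpd : (W s).PosDef := by
      rw [Matrix.posDef_iff_dotProduct_mulVec]
      constructor
      · rw [Matrix.IsHermitian, Matrix.conjTranspose_eq_transpose_of_trivial]
        exact (hWsym s).eq
      · intro x hx
        have hxx : 0 < x ⬝ᵥ x := by
          rcases (hdotnn x).lt_or_eq with h | h
          · exact h
          · exact absurd ((dotProduct_self_eq_zero).1 h.symm) hx
        have := hWlo' s x
        have h2 : 0 < mlo * (x ⬝ᵥ x) := mul_pos hmlo hxx
        simpa [star_trivial] using lt_of_lt_of_le h2 this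
    exact hpd.isUnit
  have hdet : ∀ s, IsUnit (W s).det := fun s => (Matrix.isUnit_iff_isUnit_det _).1 (hunit s)
  have hWM : ∀ s, W s * M s = 1 := fun s => Matrix.mul_nonsing_inv _ (hdet s)
  have hMsym : ∀ s, (M s).IsSymm := by
    intro s
    show (M s)ᵀ = M s
    show (W s)⁻¹ᵀ = (W s)⁻¹
    rw [Matrix.transpose_nonsing_inv, (hWsym s).eq]
  have hsymdot : ∀ s (x y : Fin n → ℝ), x ⬝ᵥ (M s).mulVec y = ((M s).mulVec x) ⬝ᵥ y := by
    intro s x y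
    rw [Matrix.dotProduct_mulVec]
    conv_lhs => rw [← (hMsym s).eq]
    rw [Matrix.vecMul_transpose]
  have hWu : ∀ s (v : Fin n → ℝ), (W s).mulVec ((M s).mulVec v) = v := by
    intro s v
    rw [Matrix.mulVec_mulVec, hWM, Matrix.one_mulVec]
  have hMpos : ∀ s, ∀ v : Fin n → ℝ, 0 ≤ v ⬝ᵥ (M s).mulVec v := by
    intro s v
    have h1 : v ⬝ᵥ (M s).mulVec v = ((M s).mulVec v) ⬝ᵥ (W s).mulVec ((M s).mulVec v) := by
      rw [hWu, hsymdot, dotProduct_comm]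
    rw [h1]
    exact hWpsd s _
  -- bounds for the inverse quadratic form
  have hsymdotW : ∀ s (x y : Fin n → ℝ), x ⬝ᵥ (W s).mulVec y = ((W s).mulVec x) ⬝ᵥ y := by
    intro s x y
    rw [Matrix.dotProduct_mulVec]
    conv_lhs => rw [← (hWsym s).eq]
    rw [Matrix.vecMul_transpose]
  have hMlo' : ∀ s (v : Fin n → ℝ), v ⬝ᵥ v ≤ mhi * (v ⬝ᵥ (M s).mulVec v) := by
    intro s v
    set w : Fin n → ℝ := (M s).mulVec v with hw
    have hWw : (W s).mulVec w = v := by rw [hw]; exact hWu s v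
    have h2 : w ⬝ᵥ (W s).mulVec v = v ⬝ᵥ v := by rw [hsymdotW s w v, hWw]
    have h3 : w ⬝ᵥ (W s).mulVec w = v ⬝ᵥ (M s).mulVec v := by
      rw [hWw, dotProduct_comm, hw]
    have hcs := aux_psd_cauchy_schwarz (W s) (hWsym s) (hWpsd s) v w
    rw [h2, h3] at hcs
    have h4 := hWhi' s v
    have h5 := hMpos s v
    have h5' : 0 ≤ v ⬝ᵥ w := by rw [hw]; exact h5
    have h3' : v ⬝ᵥ (M s).mulVec v = v ⬝ᵥ w := by rw [hw]
    rw [h3'] at hcs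
    rcases (hdotnn v).lt_or_eq with hp | hp
    · nlinarith [hcs, h4, h5', mul_le_mul_of_nonneg_left h4 h5']
    · rw [← hp]
      exact mul_nonneg hmhi.le h5'
  have hMhi' : ∀ s (v : Fin n → ℝ), mlo * (v ⬝ᵥ (M s).mulVec v) ≤ v ⬝ᵥ v := by
    intro s v
    set w : Fin n → ℝ := (M s).mulVec v with hw
    have hWw : (W s).mulVec w = v := by rw [hw]; exact hWu s v
    have hVv : v ⬝ᵥ (M s).mulVec v = v ⬝ᵥ w := by rw [hw]
    have h1 : mlo * (w ⬝ᵥ w) ≤ w ⬝ᵥ (W s).mulVec w := hWlo' s w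
    have h2 : w ⬝ᵥ (W s).mulVec w = v ⬝ᵥ w := by rw [hWw, dotProduct_comm]
    rw [h2] at h1
    have hcs := aux_psd_cauchy_schwarz 1 (Matrix.transpose_one) (fun x => by
      simpa [Matrix.one_mulVec] using hdotnn x) v w
    simp only [Matrix.one_mulVec] at hcs
    rw [dotProduct_comm w v] at hcs
    have hann : 0 ≤ v ⬝ᵥ w := le_trans (mul_nonneg hmlo.le (hdotnn w)) h1
    rw [hVv]
    rcases hann.lt_or_eq with hapos | ha0
    · nlinarith [h1, hcs, hdotnn v, hdotnn w]
    · rw [← ha0, mul_zero]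
      exact hdotnn v
  -- Lyapunov function
  set V : ℝ → ℝ := fun s => δ s ⬝ᵥ (M s).mulVec (δ s) with hVdef
  set Vd : ℝ → ℝ := fun s => δ' s ⬝ᵥ (M s).mulVec (δ s)
      + δ s ⬝ᵥ (-(M s * W' s * M s)).mulVec (δ s)
      + δ s ⬝ᵥ (M s).mulVec (δ' s) with hVddef
  have hMderiv : ∀ s, HasDerivAt M (-(M s * W' s * M s)) s :=
    aux_inv_deriv W W' hWderiv hunit
  have hVder : ∀ s, HasDerivAt V (Vd s) s := by
    intro s
    have hsum : HasDerivAt (fun t => ∑ i, ∑ j, δ t i * (M t i j * δ t j))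
        (∑ i, ∑ j, (δ' s i * (M s i j * δ s j)
          + δ s i * ((-(M s * W' s * M s)) i j * δ s j + M s i j * δ' s j))) s := by
      apply HasDerivAt.fun_sum; intro i _
      apply HasDerivAt.fun_sum; intro j _
      exact (aux_comp_deriv δ δ' s (hδd s) i).mul
        ((aux_entry_deriv M (fun r => -(M r * W' r * M r)) s (hMderiv s) i j).mul
          (aux_comp_deriv δ δ' s (hδd s) j))
    have hVfun : V = fun t => ∑ i, ∑ j, δ t i * (M t i j * δ t j) := by
      funext r
      simp [hVdef, dotProduct, Matrix.mulVec, Finset.mul_sum]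
    have hVdval : Vd s = ∑ i, ∑ j, (δ' s i * (M s i j * δ s j)
          + δ s i * ((-(M s * W' s * M s)) i j * δ s j + M s i j * δ' s j)) := by
      simp [hVddef, dotProduct, Matrix.mulVec, Finset.mul_sum,
        Finset.sum_add_distrib, mul_add]
      abel
    rw [hVfun, hVdval]
    exact hsum
  -- key differential inequality
  have hVle : ∀ s, Vd s + 2 * lam * V s ≤ 0 := by
    intro s
    have hMrw : ∀ r, (W r)⁻¹ = M r := fun r => by rw [hMdef]
    set u : Fin n → ℝ := (M s).mulVec (δ s) with hu
    have hWuu : (W s).mulVec u = δ s := by rw [hu]; exact hWu s (δ s)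
    have hode' : δ' s = (A s).mulVec (δ s)
        - (ρ s / 2) • ((B s * (B s)ᵀ).mulVec u) := by
      rw [hode s, hMrw]
      rw [Matrix.sub_mulVec, Matrix.smul_mulVec, ← Matrix.mulVec_mulVec, hu]
    have hT1 : δ' s ⬝ᵥ (M s).mulVec (δ s) = u ⬝ᵥ δ' s := by
      rw [← hu, dotProduct_comm]
    have hT3 : δ s ⬝ᵥ (M s).mulVec (δ' s) = u ⬝ᵥ δ' s := by
      rw [hsymdot s (δ s) (δ' s), ← hu]
    have hAu : u ⬝ᵥ (A s).mulVec (δ s) = u ⬝ᵥ (A s * W s).mulVec u := by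
      conv_lhs => rw [← hWuu]
      rw [Matrix.mulVec_mulVec]
    have hT : u ⬝ᵥ δ' s
        = u ⬝ᵥ (A s * W s).mulVec u - ρ s / 2 * (u ⬝ᵥ (B s * (B s)ᵀ).mulVec u) := by
      rw [hode', dotProduct_sub, dotProduct_smul, smul_eq_mul, hAu]
    have hT2 : δ s ⬝ᵥ (-(M s * W' s * M s)).mulVec (δ s)
        = -(u ⬝ᵥ (W' s).mulVec u) := by
      rw [Matrix.neg_mulVec, dotProduct_neg]
      congr 1
      rw [← Matrix.mulVec_mulVec, ← hu, ← Matrix.mulVec_mulVec,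
        hsymdot s (δ s) ((W' s).mulVec u), ← hu]
    have hV4 : V s = u ⬝ᵥ (W s).mulVec u := by
      show δ s ⬝ᵥ (M s).mulVec (δ s) = _
      rw [hsymdot s (δ s) (δ s), ← hu]
      conv_lhs => rw [← hWuu]
    have hNS := hNSD s u
    simp only [Matrix.add_mulVec, Matrix.sub_mulVec, Matrix.neg_mulVec,
      Matrix.smul_mulVec, dotProduct_add, dotProduct_sub,
      dotProduct_neg, dotProduct_smul, smul_eq_mul] at hNS
    have hAW : u ⬝ᵥ (W s * (A s)ᵀ).mulVec u = u ⬝ᵥ (A s * W s).mulVec u := by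
      have h : W s * (A s)ᵀ = (A s * W s)ᵀ := by
        rw [Matrix.transpose_mul, (hWsym s).eq]
      rw [h, Matrix.mulVec_transpose, dotProduct_comm, ← Matrix.dotProduct_mulVec]
    rw [hAW] at hNS
    have hVds : Vd s = u ⬝ᵥ (A s * W s).mulVec u - ρ s / 2 * (u ⬝ᵥ (B s * (B s)ᵀ).mulVec u)
        - (u ⬝ᵥ (W' s).mulVec u)
        + (u ⬝ᵥ (A s * W s).mulVec u - ρ s / 2 * (u ⬝ᵥ (B s * (B s)ᵀ).mulVec u)) := by
      show δ' s ⬝ᵥ (M s).mulVec (δ s) + δ s ⬝ᵥ (-(M s * W' s * M s)).mulVec (δ s)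
          + δ s ⬝ᵥ (M s).mulVec (δ' s) = _
      rw [hT1, hT2, hT3, hT]
      ring
    rw [hVds, hV4]
    linarith [hNS]
  -- Gronwall
  have key : ∀ t, 0 ≤ t → V t ≤ V 0 * Real.exp (-(2 * lam) * t) := by
    intro t ht
    have hgder : ∀ s, HasDerivAt (fun r => V r * Real.exp (2 * lam * r))
        ((Vd s + 2 * lam * V s) * Real.exp (2 * lam * s)) s := by
      intro s
      have h0 : HasDerivAt (fun r : ℝ => 2 * lam * r) (2 * lam) s := by
        simpa using (hasDerivAt_id s).const_mul (2 * lam)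
      have h1 : HasDerivAt (fun r => Real.exp (2 * lam * r))
          (Real.exp (2 * lam * s) * (2 * lam)) s :=
        (Real.hasDerivAt_exp (2 * lam * s)).comp s h0
      have h2 := (hVder s).mul h1
      refine h2.congr_deriv ?_
      ring
    have hanti : AntitoneOn (fun r => V r * Real.exp (2 * lam * r)) (Set.Ici 0) := by
      apply antitoneOn_of_deriv_nonpos (convex_Ici 0)
      · exact fun s _ => (hgder s).differentiableAt.continuousAt.continuousWithinAt
      · exact fun s _ => (hgder s).differentiableAt.differentiableWithinAt
      · intro s _
        rw [(hgder s).deriv]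
        have h := hVle s
        have he : (0:ℝ) < Real.exp (2 * lam * s) := Real.exp_pos _
        nlinarith
    have h := hanti Set.self_mem_Ici (Set.mem_Ici.2 ht) ht
    simp only [Real.exp_zero, mul_zero, mul_one] at h
    have hpos : (0:ℝ) < Real.exp (-(2 * lam) * t) := Real.exp_pos _
    have hee : Real.exp (2 * lam * t) * Real.exp (-(2 * lam) * t) = 1 := by
      rw [← Real.exp_add]
      norm_num
    have h2 : V t * (Real.exp (2 * lam * t) * Real.exp (-(2 * lam) * t)) = V t := by
      rw [hee, mul_one]
    nlinarith [mul_le_mul_of_nonneg_right h hpos.le, h2]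
  -- conclusion
  intro t ht
  have et : ‖δ t‖ ^ 2 = δ t ⬝ᵥ δ t := aux_norm_sq_eq_dot (δ t)
  have e0 : ‖δ 0‖ ^ 2 = δ 0 ⬝ᵥ δ 0 := aux_norm_sq_eq_dot (δ 0)
  have h1 : δ t ⬝ᵥ δ t ≤ mhi * V t := hMlo' t (δ t)
  have h2 : mlo * V 0 ≤ δ 0 ⬝ᵥ δ 0 := hMhi' 0 (δ 0)
  set E : ℝ := Real.exp (-(2 * lam) * t) with hE
  have hEpos : (0:ℝ) < E := Real.exp_pos _
  have hV0nn : 0 ≤ V 0 := hMpos 0 (δ 0)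
  have s1 : mhi * V t ≤ mhi * (V 0 * E) := mul_le_mul_of_nonneg_left (key t ht) hmhi.le
  have s2 : V 0 ≤ (δ 0 ⬝ᵥ δ 0) / mlo := by
    rw [le_div_iff₀ hmlo]
    linarith
  have s3 : mhi * (V 0 * E) ≤ mhi * ((δ 0 ⬝ᵥ δ 0) / mlo * E) :=
    mul_le_mul_of_nonneg_left (mul_le_mul_of_nonneg_right s2 hEpos.le) hmhi.le
  have h3 : ‖δ t‖ ^ 2 ≤ mhi / mlo * E * (δ 0 ⬝ᵥ δ 0) := by
    rw [et]
    calc δ t ⬝ᵥ δ t ≤ mhi * V t := h1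
      _ ≤ mhi * ((δ 0 ⬝ᵥ δ 0) / mlo * E) := le_trans s1 s3
      _ = mhi / mlo * E * (δ 0 ⬝ᵥ δ 0) := by ring
  have hrhs : (0:ℝ) ≤ Real.sqrt (mhi / mlo) * Real.exp (-lam * t) * ‖δ 0‖ := by positivity
  have hsq : (Real.sqrt (mhi / mlo) * Real.exp (-lam * t) * ‖δ 0‖) ^ 2
      = mhi / mlo * E * (δ 0 ⬝ᵥ δ 0) := by
    rw [mul_pow, mul_pow, Real.sq_sqrt (by positivity), e0, hE]
    have : Real.exp (-lam * t) ^ 2 = Real.exp (-(2 * lam) * t) := by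
      rw [sq, ← Real.exp_add]
      congr 1
      ring
    rw [this]
  refine le_of_pow_le_pow_left₀ two_ne_zero hrhs ?_
  rw [hsq]
  exact h3
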